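/- Let M be a positive integer and suppose u₁, u₂, … ∈ Z² is a sequence satisfying ‖u_{i+1} − u_i‖₂ ≤ M for all i ∈ N. Then for each k ∈ N there exists a set X ⊆ N with cardinality |X| = k such that {u_i : i ∈ X} is contained in a single affine line of R². -/

import Mathlib

open Set

/-- Euclidean norm on `Fin n → ℝ`. -/
noncomputable def euclNorm {n : ℕ} (x : Fin n → ℝ) : ℝ := Real.sqrt (∑ i, (x i) ^ 2)

/-- Coordinatewise cast of an integer vector to a real vector. -/
def zr {n : ℕ} (x : Fin n → ℤ) : Fin n → ℝ := fun i => (x i : ℝ)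

section Aux

/-- If every fiber of `g` has fewer than `k` elements, any finset on which `g`
takes values in `[A,B]` has at most `(k-1)*(B+1-A)` elements. -/
lemma windowBound (k : ℕ) (g : ℕ → ℤ)
    (hfib : ∀ c : ℤ, ∀ F : Finset ℕ, (∀ i ∈ F, g i = c) → F.card < k)
    (A B : ℤ) (hAB : A ≤ B) (F : Finset ℕ) (hF : ∀ i ∈ F, A ≤ g i ∧ g i ≤ B) :
    (F.card : ℤ) ≤ ((k : ℤ) - 1) * (B + 1 - A) := by
  have hk : 1 ≤ k := by
    have := hfib 0 ∅ (by simp)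
    omega
  have h1 : F.card = ∑ a ∈ F.image g, (F.filter fun x => g x = a).card :=
    Finset.card_eq_sum_card_image g F
  have h2 : ∀ a ∈ F.image g, (F.filter fun x => g x = a).card ≤ k - 1 := by
    intro a _
    have := hfib a (F.filter fun x => g x = a) (fun i hi => (Finset.mem_filter.mp hi).2)
    omega
  have h3 : F.card ≤ (F.image g).card * (k - 1) := by
    rw [h1]
    calc ∑ a ∈ F.image g, (F.filter fun x => g x = a).card
        ≤ (F.image g).card • (k - 1) := Finset.sum_le_card_nsmul _ _ _ h2
      _ = (F.image g).card * (k - 1) := by simp [smul_eq_mul]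
  have h4 : F.image g ⊆ Finset.Icc A B := by
    intro a ha
    obtain ⟨i, hi, rfl⟩ := Finset.mem_image.mp ha
    exact Finset.mem_Icc.mpr ⟨(hF i hi).1, (hF i hi).2⟩
  have h5 : (F.image g).card ≤ (Finset.Icc A B).card := Finset.card_le_card h4
  have h6 : ((Finset.Icc A B).card : ℤ) = B + 1 - A := by
    rw [Int.card_Icc]
    exact Int.toNat_of_nonneg (by linarith)
  have h7 : ((F.image g).card : ℤ) ≤ B + 1 - A := by
    calc ((F.image g).card : ℤ) ≤ ((Finset.Icc A B).card : ℤ) := by exact_mod_cast h5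
      _ = B + 1 - A := h6
  have h8 : (F.card : ℤ) ≤ ((F.image g).card : ℤ) * ((k : ℤ) - 1) := by
    have : ((k - 1 : ℕ) : ℤ) = (k : ℤ) - 1 := by omega
    calc (F.card : ℤ) ≤ (((F.image g).card * (k - 1) : ℕ) : ℤ) := by exact_mod_cast h3
      _ = ((F.image g).card : ℤ) * ((k : ℤ) - 1) := by push_cast [this]; ring
  calc (F.card : ℤ) ≤ ((F.image g).card : ℤ) * ((k : ℤ) - 1) := h8
    _ ≤ (B + 1 - A) * ((k : ℤ) - 1) := by
        apply mul_le_mul_of_nonneg_right h7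
        have : (1 : ℤ) ≤ (k : ℤ) := by exact_mod_cast hk
        linarith
    _ = ((k : ℤ) - 1) * (B + 1 - A) := by ring

/-- `|g|` eventually exceeds any bound. -/
lemma escape (k : ℕ) (g : ℕ → ℤ)
    (hfib : ∀ c : ℤ, ∀ F : Finset ℕ, (∀ i ∈ F, g i = c) → F.card < k)
    (W : ℤ) (hW : 0 ≤ W) : ∃ N : ℕ, ∀ i ≥ N, W < |g i| := by
  have hfin : {i : ℕ | -W ≤ g i ∧ g i ≤ W}.Finite := by
    by_contra hinf
    rw [← Set.not_infinite, not_not] at hinf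
    obtain ⟨F, hFsub, hFcard⟩ := hinf.exists_subset_card_eq (((k : ℤ) * (2 * W + 1)).toNat + 1)
    have hb := windowBound k g hfib (-W) W (by linarith) F (fun i hi => hFsub hi)
    have hk : 1 ≤ k := by
      have := hfib 0 ∅ (by simp)
      omega
    have hcard : ((k : ℤ) * (2 * W + 1)) + 1 ≤ (F.card : ℤ) := by
      rw [hFcard]
      push_cast
      have := Int.self_le_toNat ((k : ℤ) * (2 * W + 1))
      linarith
    have hkz : (1 : ℤ) ≤ (k : ℤ) := by exact_mod_cast hk
    nlinarith [hb, hcard]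
  obtain ⟨N₀, hN₀⟩ := hfin.bddAbove
  refine ⟨N₀ + 1, fun i hi => ?_⟩
  by_contra hcon
  push_neg at hcon
  have : i ∈ {i : ℕ | -W ≤ g i ∧ g i ≤ W} := abs_le.mp hcon
  have := hN₀ this
  omega

/-- Eventually a bounded-step escaping sequence has constant sign. -/
lemma eventualSign (k : ℕ) (g : ℕ → ℤ)
    (hfib : ∀ c : ℤ, ∀ F : Finset ℕ, (∀ i ∈ F, g i = c) → F.card < k)
    (B : ℤ) (hB : 0 ≤ B) (hstep : ∀ i, |g (i + 1) - g i| ≤ B) :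
    (∃ N, ∀ i ≥ N, 0 < g i) ∨ (∃ N, ∀ i ≥ N, g i < 0) := by
  obtain ⟨N, hN⟩ := escape k g hfib B hB
  have hNN := hN N (le_refl N)
  rcases lt_trichotomy (g N) 0 with hneg | hzero | hpos
  · right
    refine ⟨N, ?_⟩
    intro i hi
    induction i, hi using Nat.le_induction with
    | base => exact hneg
    | succ i hi ih =>
        have h1 := hN i hi
        have h2 : g i < -B := by
          have : |g i| = -(g i) := abs_of_neg ih
          omega
        have h3 := hstep i
        have := abs_le.mp h3
        omega
  · rw [hzero] at hNN; simp at hNN; omega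
  · left
    refine ⟨N, ?_⟩
    intro i hi
    induction i, hi using Nat.le_induction with
    | base => exact hpos
    | succ i hi ih =>
        have h1 := hN i hi
        have h2 : B < g i := by
          have : |g i| = g i := abs_of_nonneg (le_of_lt ih)
          omega
        have := abs_le.mp (hstep i)
        omega

/-- An eventually-positive sequence is bounded below. -/
lemma lowerBoundOfPos (g : ℕ → ℤ) (hpos : ∃ N, ∀ i ≥ N, 0 < g i) :
    ∃ C : ℤ, 0 ≤ C ∧ ∀ i, -C ≤ g i := by
  obtain ⟨N, hN⟩ := hpos
  set F := (Finset.range (N + 1)).image (fun i => -(g i)) with hF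
  have hne : F.Nonempty := ⟨-(g 0), Finset.mem_image.mpr ⟨0, by simp⟩⟩
  refine ⟨max (F.max' hne) 0, le_max_right _ _, fun i => ?_⟩
  rcases le_or_gt i N with hle | hlt
  · have : -(g i) ∈ F := Finset.mem_image.mpr ⟨i, Finset.mem_range.mpr (by omega), rfl⟩
    have := F.le_max' _ this
    have h2 : F.max' hne ≤ max (F.max' hne) 0 := le_max_left _ _
    omega
  · have := hN i (by omega)
    have h2 : (0:ℤ) ≤ max (F.max' hne) 0 := le_max_right _ _
    omega

/-- There is an index `j ≤ T` where `g` is about `T/k` large. -/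
lemma maxCount (k : ℕ) (g : ℕ → ℤ)
    (hfib : ∀ c : ℤ, ∀ F : Finset ℕ, (∀ i ∈ F, g i = c) → F.card < k)
    (C : ℤ) (hC : 0 ≤ C) (hlb : ∀ i, -C ≤ g i) (T : ℕ) :
    ∃ j ≤ T, (T : ℤ) + 1 ≤ (k : ℤ) * (g j + C + 1) := by
  have hk : 1 ≤ k := by have := hfib 0 ∅ (by simp); omega
  set F := Finset.range (T + 1) with hFdef
  have hFne : F.Nonempty := ⟨0, Finset.mem_range.mpr (by omega)⟩
  have hne : (F.image g).Nonempty := hFne.image g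
  set Gm := (F.image g).max' hne with hGm
  obtain ⟨j, hjF, hjval⟩ := Finset.mem_image.mp ((F.image g).max'_mem hne)
  have hjT : j ≤ T := by
    have := Finset.mem_range.mp hjF
    omega
  have hGlb : -C ≤ Gm := by rw [hGm, ← hjval]; exact hlb j
  have hwb := windowBound k g hfib (-C) Gm (by linarith) F
    (fun i hi => ⟨hlb i, Finset.le_max' _ _ (Finset.mem_image_of_mem g hi)⟩)
  have hcard : (F.card : ℤ) = (T : ℤ) + 1 := by simp [hFdef]
  refine ⟨j, hjT, ?_⟩
  rw [show Gm = g j from by rw [hGm, hjval]] at hwb hGlb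
  have hkz : (1 : ℤ) ≤ (k : ℤ) := by exact_mod_cast hk
  nlinarith [hwb, hcard, hGlb]

/-- Coordinates grow at most linearly. -/
lemma coordBound (M : ℕ) (g : ℕ → ℤ) (hstep : ∀ i, |g (i + 1) - g i| ≤ (M : ℤ)) :
    ∀ i : ℕ, |g i| ≤ |g 0| + (M : ℤ) * i := by
  intro i
  induction i with
  | zero => simp
  | succ i ih =>
      have h1 := hstep i
      have h2 : |g (i+1)| ≤ |g i| + |g (i+1) - g i| := by
        calc |g (i+1)| = |g i + (g (i+1) - g i)| := by ring_nf
          _ ≤ |g i| + |g (i+1) - g i| := abs_add_le _ _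
      push_cast
      push_cast at ih
      linarith


/-- The key quantitative contradiction. -/
lemma finalContra (k M : ℕ) (g₁ g₂ w : ℕ → ℤ) (α β C₁ C₂ c₀ : ℤ)
    (hα : 0 ≤ α) (hβ : β ≤ 0) (hC₁ : 0 ≤ C₁) (hC₂ : 0 ≤ C₂) (hc₀ : 0 ≤ c₀)
    (hid : ∀ i, w i = α * g₁ i + β * g₂ i)
    (hw : ∀ i : ℕ, |w i| ≤ c₀ + (M : ℤ) * i)
    (hg₁ : ∀ i, -C₁ ≤ g₁ i) (hg₂ : ∀ i, g₂ i ≤ C₂)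
    (hm₁ : ∀ T : ℕ, ∃ j ≤ T, (T : ℤ) + 1 ≤ (k : ℤ) * (g₁ j + C₁ + 1))
    (hm₂ : ∀ T : ℕ, ∃ j ≤ T, (T : ℤ) + 1 ≤ (k : ℤ) * (-(g₂ j) + C₂ + 1))
    (hbig : ((k : ℤ) * (M : ℤ) < α) ∨ ((k : ℤ) * (M : ℤ) < -β)) : False := by
  set K : ℤ := (k : ℤ) with hK
  set Mz : ℤ := (M : ℤ) with hMz
  have hK0 : 0 ≤ K := Int.natCast_nonneg k
  have hM0 : 0 ≤ Mz := Int.natCast_nonneg M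
  set T : ℕ := (K * c₀ + K * (-β) * (C₂ + 1) + K * α * (C₁ + 1)).toNat + 1 with hT
  have hTbig : K * c₀ + K * (-β) * (C₂ + 1) + K * α * (C₁ + 1) < (T : ℤ) := by
    rw [hT]
    push_cast
    have := Int.self_le_toNat (K * c₀ + K * (-β) * (C₂ + 1) + K * α * (C₁ + 1))
    linarith
  have hMT : ∀ j : ℕ, j ≤ T → (Mz * j : ℤ) ≤ Mz * T := by
    intro j hj
    apply mul_le_mul_of_nonneg_left _ hM0
    exact_mod_cast hj
  rcases hbig with hb | hb
  · obtain ⟨j, hjT, hcount⟩ := hm₁ T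
    -- w j ≥ α g₁ j + β C₂
    have h1 : α * g₁ j + β * C₂ ≤ w j := by
      rw [hid j]
      have : β * C₂ ≤ β * g₂ j := by
        have := hg₂ j
        nlinarith
      linarith
    have h2 : w j ≤ c₀ + Mz * T := by
      have := (abs_le.mp (hw j)).2
      have := hMT j hjT
      linarith
    have h3 : α * g₁ j ≤ c₀ + Mz * T + (-β) * C₂ := by linarith
    have h4 : K * (α * g₁ j) ≤ K * (c₀ + Mz * T + (-β) * C₂) :=
      mul_le_mul_of_nonneg_left h3 hK0
    -- from count: α*(T+1) ≤ α * (K * (g₁ j + C₁ + 1))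
    have h5 : α * ((T : ℤ) + 1) ≤ α * (K * (g₁ j + C₁ + 1)) :=
      mul_le_mul_of_nonneg_left hcount hα
    -- α ≥ K*Mz + 1
    have h6 : K * Mz + 1 ≤ α := hb
    have h7 : (K * Mz + 1) * ((T : ℤ) + 1) ≤ α * ((T : ℤ) + 1) := by
      apply mul_le_mul_of_nonneg_right h6
      positivity
    nlinarith [h4, h5, h7, hTbig, mul_nonneg (mul_nonneg hK0 (neg_nonneg.mpr hβ)) hC₂]
  · obtain ⟨j, hjT, hcount⟩ := hm₂ T
    have h1 : -(α * C₁) + (-β) * (-(g₂ j)) ≤ w j := by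
      rw [hid j]
      have : -(α * C₁) ≤ α * g₁ j := by
        have := hg₁ j
        nlinarith
      have hrw : β * g₂ j = (-β) * (-(g₂ j)) := by ring
      linarith [hrw ▸ le_refl (β * g₂ j)]
    have h2 : w j ≤ c₀ + Mz * T := by
      have := (abs_le.mp (hw j)).2
      have := hMT j hjT
      linarith
    have h3 : (-β) * (-(g₂ j)) ≤ c₀ + Mz * T + α * C₁ := by linarith
    have h4 : K * ((-β) * (-(g₂ j))) ≤ K * (c₀ + Mz * T + α * C₁) :=
      mul_le_mul_of_nonneg_left h3 hK0
    have h5 : (-β) * ((T : ℤ) + 1) ≤ (-β) * (K * (-(g₂ j) + C₂ + 1)) :=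
      mul_le_mul_of_nonneg_left hcount (by linarith)
    have h6 : K * Mz + 1 ≤ -β := hb
    have h7 : (K * Mz + 1) * ((T : ℤ) + 1) ≤ (-β) * ((T : ℤ) + 1) := by
      apply mul_le_mul_of_nonneg_right h6
      positivity
    nlinarith [h4, h5, h7, hTbig, mul_nonneg (mul_nonneg hK0 hα) hC₁]


/-- Points satisfying a nontrivial linear equation lie on a line. -/
lemma line_of_fiber (p q c : ℤ) (hpq : ¬(p = 0 ∧ q = 0)) :
    ∃ a b : Fin 2 → ℝ, b ≠ 0 ∧ ∀ P : Fin 2 → ℝ,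
      (p : ℝ) * P 0 + (q : ℝ) * P 1 = (c : ℝ) → ∃ t : ℝ, P = a + t • b := by
  have hD : 0 < (p : ℝ) ^ 2 + (q : ℝ) ^ 2 := by
    rcases not_and_or.mp hpq with hp | hq
    · have h : (p : ℝ) ≠ 0 := Int.cast_ne_zero.mpr hp
      positivity
    · have h : (q : ℝ) ≠ 0 := Int.cast_ne_zero.mpr hq
      positivity
  have hDne : (p : ℝ) ^ 2 + (q : ℝ) ^ 2 ≠ 0 := ne_of_gt hD
  refine ⟨![(c : ℝ) * p / ((p : ℝ) ^ 2 + (q : ℝ) ^ 2), (c : ℝ) * q / ((p : ℝ) ^ 2 + (q : ℝ) ^ 2)],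
    ![-(q : ℝ), (p : ℝ)], ?_, ?_⟩
  · intro hb0
    have h0 := congrFun hb0 0
    have h1 := congrFun hb0 1
    simp at h0 h1
    rcases not_and_or.mp hpq with hp | hq
    · exact hp (by exact_mod_cast h1)
    · exact hq (by exact_mod_cast h0)
  · intro P hP
    refine ⟨(-(q : ℝ) * P 0 + (p : ℝ) * P 1) / ((p : ℝ) ^ 2 + (q : ℝ) ^ 2), ?_⟩
    funext j
    fin_cases j
    · simp only [Fin.isValue, Pi.add_apply, Pi.smul_apply, smul_eq_mul,
        Fin.zero_eta, Matrix.cons_val_zero]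
      field_simp
      linear_combination (p : ℝ) * hP
    · simp only [Fin.isValue, Pi.add_apply, Pi.smul_apply, smul_eq_mul,
        Fin.mk_one, Matrix.cons_val_one, Matrix.head_cons, Matrix.cons_val_zero]
      field_simp
      linear_combination (q : ℝ) * hP


def lf (x y : ℕ → ℤ) (v : ℤ × ℤ) : ℕ → ℤ := fun i => v.1 * x i + v.2 * y i

section SB

variable (k M : ℕ) (x y : ℕ → ℤ)

lemma lf_step (hsx : ∀ i, |x (i + 1) - x i| ≤ (M : ℤ)) (hsy : ∀ i, |y (i + 1) - y i| ≤ (M : ℤ))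
    (v : ℤ × ℤ) (i : ℕ) :
    |lf x y v (i + 1) - lf x y v i| ≤ (|v.1| + |v.2|) * (M : ℤ) := by
  have h : lf x y v (i + 1) - lf x y v i
      = v.1 * (x (i + 1) - x i) + v.2 * (y (i + 1) - y i) := by
    simp only [lf]; ring
  rw [h]
  calc |v.1 * (x (i + 1) - x i) + v.2 * (y (i + 1) - y i)|
      ≤ |v.1 * (x (i + 1) - x i)| + |v.2 * (y (i + 1) - y i)| := abs_add_le _ _
    _ = |v.1| * |x (i + 1) - x i| + |v.2| * |y (i + 1) - y i| := by rw [abs_mul, abs_mul]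
    _ ≤ |v.1| * (M : ℤ) + |v.2| * (M : ℤ) := by
        gcongr
        · exact hsx i
        · exact hsy i
    _ = (|v.1| + |v.2|) * (M : ℤ) := by ring

lemma signed (hsx : ∀ i, |x (i + 1) - x i| ≤ (M : ℤ)) (hsy : ∀ i, |y (i + 1) - y i| ≤ (M : ℤ))
    (hfib : ∀ v : ℤ × ℤ, v ≠ 0 → ∀ c : ℤ, ∀ F : Finset ℕ,
      (∀ i ∈ F, lf x y v i = c) → F.card < k)
    (v : ℤ × ℤ) (hv : v ≠ 0) :
    (∃ N, ∀ i ≥ N, 0 < lf x y v i) ∨ (∃ N, ∀ i ≥ N, lf x y v i < 0) := by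
  apply eventualSign k (lf x y v) (hfib v hv) ((|v.1| + |v.2|) * (M : ℤ))
  · positivity
  · exact lf_step M x y hsx hsy v

/-- Stern–Brocot style construction of a pair of big "positive/negative" functionals. -/
lemma sternBrocot (hsx : ∀ i, |x (i + 1) - x i| ≤ (M : ℤ)) (hsy : ∀ i, |y (i + 1) - y i| ≤ (M : ℤ))
    (hfib : ∀ v : ℤ × ℤ, v ≠ 0 → ∀ c : ℤ, ∀ F : Finset ℕ,
      (∀ i ∈ F, lf x y v i = c) → F.card < k) :
    ∀ n : ℕ, ∃ (v₁ v₂ : ℤ × ℤ) (s₁ s₂ e : ℤ),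
      (∃ N, ∀ i ≥ N, 0 < lf x y v₁ i) ∧ (∃ N, ∀ i ≥ N, lf x y v₂ i < 0) ∧
      (s₁ = 1 ∨ s₁ = -1) ∧ (s₂ = 1 ∨ s₂ = -1) ∧ (e = 1 ∨ e = -1) ∧
      v₁.1 * v₂.2 - v₁.2 * v₂.1 = e ∧
      0 ≤ s₁ * v₁.1 ∧ 0 ≤ s₁ * v₂.1 ∧ 0 ≤ s₂ * v₁.2 ∧ 0 ≤ s₂ * v₂.2 ∧
      (n : ℤ) ≤ s₁ * v₁.1 + s₂ * v₁.2 + s₁ * v₂.1 + s₂ * v₂.2 := by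
  intro n
  induction n with
  | zero =>
      rcases signed k M x y hsx hsy hfib (1, 0) (by simp) with h1 | h1
      · rcases signed k M x y hsx hsy hfib (0, 1) (by simp) with h2 | h2
        · -- x pos, y pos : v₁ = (1,0), v₂ = (0,-1)
          refine ⟨(1, 0), (0, -1), 1, -1, -1, h1, ?_, by simp, by simp, by simp, by norm_num,
            by norm_num, by norm_num, by norm_num, by norm_num, by norm_num⟩
          obtain ⟨N, hN⟩ := h2
          exact ⟨N, fun i hi => by have := hN i hi; simp only [lf] at *; omega⟩
        · refine ⟨(1, 0), (0, 1), 1, 1, 1, h1, h2, by simp, by simp, by simp, by norm_num,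
            by norm_num, by norm_num, by norm_num, by norm_num, by norm_num⟩
      · rcases signed k M x y hsx hsy hfib (0, 1) (by simp) with h2 | h2
        · refine ⟨(-1, 0), (0, -1), -1, -1, 1, ?_, ?_, by simp, by simp, by simp, by norm_num,
            by norm_num, by norm_num, by norm_num, by norm_num, by norm_num⟩
          · obtain ⟨N, hN⟩ := h1
            exact ⟨N, fun i hi => by have := hN i hi; simp only [lf] at *; omega⟩
          · obtain ⟨N, hN⟩ := h2
            exact ⟨N, fun i hi => by have := hN i hi; simp only [lf] at *; omega⟩
        · refine ⟨(-1, 0), (0, 1), -1, 1, -1, ?_, h2, by simp, by simp, by simp, by norm_num,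
            by norm_num, by norm_num, by norm_num, by norm_num, by norm_num⟩
          obtain ⟨N, hN⟩ := h1
          exact ⟨N, fun i hi => by have := hN i hi; simp only [lf] at *; omega⟩
  | succ n ih =>
      obtain ⟨v₁, v₂, s₁, s₂, e, hpos₁, hneg₂, hs₁, hs₂, he, hdet, q11, q21, q12, q22, hsum⟩ := ih
      set m : ℤ × ℤ := (v₁.1 + v₂.1, v₁.2 + v₂.2) with hm
      have hmdet₁ : m.1 * v₂.2 - m.2 * v₂.1 = e := by
        simp only [hm]
        linarith [hdet]
      have hmdet₂ : v₁.1 * m.2 - v₁.2 * m.1 = e := by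
        simp only [hm]
        linarith [hdet]
      have hmne : m ≠ 0 := by
        intro h0
        rw [Prod.ext_iff] at h0
        simp only [hm] at h0
        have e0 : e ≠ 0 := by rcases he with rfl | rfl <;> norm_num
        apply e0
        rw [← hdet]
        have h1 : v₂.1 = -v₁.1 := by have := h0.1; simp at this; linarith
        have h2 : v₂.2 = -v₁.2 := by have := h0.2; simp at this; linarith
        rw [h1, h2]; ring
      have hv₁ne : v₁ ≠ 0 := by
        intro h0
        rw [Prod.ext_iff] at h0
        have e0 : e ≠ 0 := by rcases he with rfl | rfl <;> norm_num
        apply e0; rw [← hdet, h0.1, h0.2]; simp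
      have hv₂ne : v₂ ≠ 0 := by
        intro h0
        rw [Prod.ext_iff] at h0
        have e0 : e ≠ 0 := by rcases he with rfl | rfl <;> norm_num
        apply e0; rw [← hdet, h0.1, h0.2]; simp
      have hv₂big : 1 ≤ s₁ * v₂.1 + s₂ * v₂.2 := by
        rcases eq_or_lt_of_le q21 with h1 | h1
        · rcases eq_or_lt_of_le q22 with h2 | h2
          · exfalso
            apply hv₂ne
            have hs₁0 : s₁ ≠ 0 := by rcases hs₁ with rfl | rfl <;> norm_num
            have hs₂0 : s₂ ≠ 0 := by rcases hs₂ with rfl | rfl <;> norm_num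
            have : v₂.1 = 0 := by
              rcases hs₁ with rfl | rfl <;> omega
            have : v₂.2 = 0 := by
              rcases hs₂ with rfl | rfl <;> omega
            rw [Prod.ext_iff]
            constructor <;> assumption
          · omega
        · omega
      have hv₁big : 1 ≤ s₁ * v₁.1 + s₂ * v₁.2 := by
        rcases eq_or_lt_of_le q11 with h1 | h1
        · rcases eq_or_lt_of_le q12 with h2 | h2
          · exfalso
            apply hv₁ne
            have : v₁.1 = 0 := by rcases hs₁ with rfl | rfl <;> omega
            have : v₁.2 = 0 := by rcases hs₂ with rfl | rfl <;> omega
            rw [Prod.ext_iff]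
            constructor <;> assumption
          · omega
        · omega
      rcases signed k M x y hsx hsy hfib m hmne with hp | hp
      · -- replace v₁ by m
        refine ⟨m, v₂, s₁, s₂, e, hp, hneg₂, hs₁, hs₂, he, hmdet₁, ?_, q21, ?_, q22, ?_⟩
        · simp only [hm]; nlinarith [q11, q21]
        · simp only [hm]; nlinarith [q12, q22]
        · simp only [hm]
          push_cast
          nlinarith [hsum, hv₂big]
      · -- replace v₂ by m
        have hpneg : ∃ N, ∀ i ≥ N, lf x y m i < 0 := hp
        refine ⟨v₁, m, s₁, s₂, e, hpos₁, hpneg, hs₁, hs₂, he, hmdet₂, q11, ?_, q12, ?_, ?_⟩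
        · simp only [hm]; nlinarith [q11, q21]
        · simp only [hm]; nlinarith [q12, q22]
        · simp only [hm]
          push_cast
          nlinarith [hsum, hv₁big]

end SB


end Aux


theorem ramsey_bounded_gaps_collinear
    (M : ℕ) (hM : 0 < M) (u : ℕ → Fin 2 → ℤ)
    (h : ∀ i : ℕ, euclNorm (zr (u (i + 1)) - zr (u i)) ≤ (M : ℝ)) :
    ∀ k : ℕ, ∃ X : Finset ℕ, X.card = k ∧
      ∃ a b : Fin 2 → ℝ, b ≠ 0 ∧ ∀ i ∈ X, ∃ t : ℝ, zr (u i) = a + t • b := by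
  intro k
  rcases Nat.eq_zero_or_pos k with rfl | hk
  · refine ⟨∅, rfl, 0, ![1, 0], ?_, by simp⟩
    intro hb
    have := congrFun hb 0
    simp at this
  by_contra hcon
  set x : ℕ → ℤ := fun i => u i 0 with hxdef
  set y : ℕ → ℤ := fun i => u i 1 with hydef
  -- coordinatewise step bounds
  have hstep : ∀ i : ℕ, |x (i + 1) - x i| ≤ (M : ℤ) ∧ |y (i + 1) - y i| ≤ (M : ℤ) := by
    intro i
    have hi := h i
    have hnn : (0 : ℝ) ≤ ∑ j, ((zr (u (i + 1)) - zr (u i)) j) ^ 2 := by positivity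
    have h2 : ∑ j, ((zr (u (i + 1)) - zr (u i)) j) ^ 2 ≤ (M : ℝ) ^ 2 := by
      have hs := Real.sq_sqrt hnn
      have hs2 := Real.sqrt_nonneg (∑ j, ((zr (u (i + 1)) - zr (u i)) j) ^ 2)
      unfold euclNorm at hi
      nlinarith [hi]
    have h3 : ((x (i + 1) - x i : ℤ) : ℝ) ^ 2 + ((y (i + 1) - y i : ℤ) : ℝ) ^ 2 ≤ (M : ℝ) ^ 2 := by
      rw [Fin.sum_univ_two] at h2
      simp only [Pi.sub_apply, zr, hxdef, hydef] at h2 ⊢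
      push_cast
      push_cast at h2
      linarith
    have h4 : (x (i + 1) - x i) ^ 2 + (y (i + 1) - y i) ^ 2 ≤ (M : ℤ) ^ 2 := by
      exact_mod_cast h3
    constructor
    · nlinarith [sq_abs (x (i + 1) - x i), abs_nonneg (x (i + 1) - x i),
        sq_nonneg (y (i + 1) - y i), Int.natCast_nonneg M, sq_abs (y (i+1) - y i)]
    · nlinarith [sq_abs (y (i + 1) - y i), abs_nonneg (y (i + 1) - y i),
        sq_nonneg (x (i + 1) - x i), Int.natCast_nonneg M]
  have hsx : ∀ i, |x (i + 1) - x i| ≤ (M : ℤ) := fun i => (hstep i).1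
  have hsy : ∀ i, |y (i + 1) - y i| ≤ (M : ℤ) := fun i => (hstep i).2
  -- fibers of all linear functionals are small
  have hfib : ∀ v : ℤ × ℤ, v ≠ 0 → ∀ c : ℤ, ∀ F : Finset ℕ,
      (∀ i ∈ F, lf x y v i = c) → F.card < k := by
    intro v hv c F hF
    by_contra hge
    push_neg at hge
    obtain ⟨X, hXsub, hXcard⟩ := F.exists_subset_card_eq hge
    have hvne : ¬(v.1 = 0 ∧ v.2 = 0) := by
      intro ⟨h1, h2⟩
      exact hv (Prod.ext h1 h2)
    obtain ⟨a, b, hb, hline⟩ := line_of_fiber v.1 v.2 c hvne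
    refine hcon ⟨X, hXcard, a, b, hb, fun i hi => ?_⟩
    apply hline
    have := hF i (hXsub hi)
    simp only [lf, hxdef, hydef] at this
    have : ((v.1 * u i 0 + v.2 * u i 1 : ℤ) : ℝ) = (c : ℝ) := by exact_mod_cast this
    simp only [zr]
    push_cast at this ⊢
    linarith
  -- Stern-Brocot pair with large coefficients
  obtain ⟨v₁, v₂, s₁, s₂, e, hpos₁, hneg₂, hs₁, hs₂, he, hdet, q11, q21, q12, q22, hsum⟩ :=
    sternBrocot k M x y hsx hsy hfib (4 * k * M + 4)
  have hv₁ne : v₁ ≠ 0 := by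
    intro h0
    rw [Prod.ext_iff] at h0
    have e0 : e ≠ 0 := by rcases he with rfl | rfl <;> norm_num
    apply e0; rw [← hdet, h0.1, h0.2]; simp
  have hv₂ne : v₂ ≠ 0 := by
    intro h0
    rw [Prod.ext_iff] at h0
    have e0 : e ≠ 0 := by rcases he with rfl | rfl <;> norm_num
    apply e0; rw [← hdet, h0.1, h0.2]; simp
  -- bounds infrastructure shared by both cases
  obtain ⟨C₁, hC₁0, hg₁lb⟩ := lowerBoundOfPos (lf x y v₁) hpos₁
  obtain ⟨C₂, hC₂0, hg₂lb'⟩ := lowerBoundOfPos (fun i => -(lf x y v₂ i))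
    (by obtain ⟨N, hN⟩ := hneg₂; exact ⟨N, fun i hi => by show 0 < -(lf x y v₂ i); linarith [hN i hi]⟩)
  have hg₂ub : ∀ i, lf x y v₂ i ≤ C₂ := fun i => by have := hg₂lb' i; omega
  have hm₁ := maxCount k (lf x y v₁) (hfib v₁ hv₁ne) C₁ hC₁0 hg₁lb
  have hm₂ : ∀ T : ℕ, ∃ j ≤ T, (T : ℤ) + 1 ≤ (k : ℤ) * (-(lf x y v₂ j) + C₂ + 1) := by
    have hfib' : ∀ c : ℤ, ∀ F : Finset ℕ, (∀ i ∈ F, -(lf x y v₂ i) = c) → F.card < k := by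
      intro c F hF
      exact hfib v₂ hv₂ne (-c) F (fun i hi => by have := hF i hi; omega)
    exact maxCount k (fun i => -(lf x y v₂ i)) hfib' C₂ hC₂0 hg₂lb'
  have hxbound := coordBound M x hsx
  have hybound := coordBound M y hsy
  set kM : ℤ := (k : ℤ) * (M : ℤ) with hkM
  have hbig4 : kM < s₂ * v₁.2 ∨ kM < s₂ * v₂.2 ∨ kM < s₁ * v₁.1 ∨ kM < s₁ * v₂.1 := by
    by_contra hall
    push_neg at hall
    have hcast : ((4 * k * M + 4 : ℕ) : ℤ) = 4 * kM + 4 := by push_cast; ring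
    rw [hcast] at hsum
    linarith [hall.1, hall.2.1, hall.2.2.1, hall.2.2.2]
  have habs : ∀ s t : ℤ, (s = 1 ∨ s = -1) → (t = 1 ∨ t = -1) → |s * t| = 1 := by
    intro s t hs ht
    rcases hs with rfl | rfl <;> rcases ht with rfl | rfl <;> norm_num
  rcases hbig4 with hB | hB | hB | hB
  -- case s₂ * v₁.2 > kM : b-style functional, right disjunct
  · refine finalContra k M (lf x y v₁) (lf x y v₂) (fun i => (s₂ * e) * x i)
      (s₂ * v₂.2) (-(s₂ * v₁.2)) C₁ C₂ |x 0| q22 (by linarith) hC₁0 hC₂0 (abs_nonneg _)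
      ?_ ?_ hg₁lb hg₂ub hm₁ hm₂ (Or.inr (by linarith))
    · intro i
      have : (s₂ * v₂.2) * lf x y v₁ i + (-(s₂ * v₁.2)) * lf x y v₂ i
          = s₂ * (v₁.1 * v₂.2 - v₁.2 * v₂.1) * x i := by simp only [lf]; ring
      rw [this, hdet]
    · intro i
      have h1 : |(s₂ * e) * x i| = |x i| := by
        rw [abs_mul, habs s₂ e hs₂ he, one_mul]
      rw [h1]; exact hxbound i
  -- case s₂ * v₂.2 > kM : b-style functional, left disjunct
  · refine finalContra k M (lf x y v₁) (lf x y v₂) (fun i => (s₂ * e) * x i)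
      (s₂ * v₂.2) (-(s₂ * v₁.2)) C₁ C₂ |x 0| q22 (by linarith) hC₁0 hC₂0 (abs_nonneg _)
      ?_ ?_ hg₁lb hg₂ub hm₁ hm₂ (Or.inl (by linarith))
    · intro i
      have : (s₂ * v₂.2) * lf x y v₁ i + (-(s₂ * v₁.2)) * lf x y v₂ i
          = s₂ * (v₁.1 * v₂.2 - v₁.2 * v₂.1) * x i := by simp only [lf]; ring
      rw [this, hdet]
    · intro i
      have h1 : |(s₂ * e) * x i| = |x i| := by
        rw [abs_mul, habs s₂ e hs₂ he, one_mul]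
      rw [h1]; exact hxbound i
  -- case s₁ * v₁.1 > kM : a-style functional, right disjunct
  · refine finalContra k M (lf x y v₁) (lf x y v₂) (fun i => (-(s₁ * e)) * y i)
      (s₁ * v₂.1) (-(s₁ * v₁.1)) C₁ C₂ |y 0| q21 (by linarith) hC₁0 hC₂0 (abs_nonneg _)
      ?_ ?_ hg₁lb hg₂ub hm₁ hm₂ (Or.inr (by linarith))
    · intro i
      have : (s₁ * v₂.1) * lf x y v₁ i + (-(s₁ * v₁.1)) * lf x y v₂ i
          = -(s₁ * (v₁.1 * v₂.2 - v₁.2 * v₂.1)) * y i := by simp only [lf]; ring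
      rw [this, hdet]
    · intro i
      have h1 : |(-(s₁ * e)) * y i| = |y i| := by
        rw [abs_mul, abs_neg, habs s₁ e hs₁ he, one_mul]
      rw [h1]; exact hybound i
  -- case s₁ * v₂.1 > kM : a-style functional, left disjunct
  · refine finalContra k M (lf x y v₁) (lf x y v₂) (fun i => (-(s₁ * e)) * y i)
      (s₁ * v₂.1) (-(s₁ * v₁.1)) C₁ C₂ |y 0| q21 (by linarith) hC₁0 hC₂0 (abs_nonneg _)
      ?_ ?_ hg₁lb hg₂ub hm₁ hm₂ (Or.inl (by linarith))
    · intro i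
      have : (s₁ * v₂.1) * lf x y v₁ i + (-(s₁ * v₁.1)) * lf x y v₂ i
          = -(s₁ * (v₁.1 * v₂.2 - v₁.2 * v₂.1)) * y i := by simp only [lf]; ring
      rw [this, hdet]
    · intro i
      have h1 : |(-(s₁ * e)) * y i| = |y i| := by
        rw [abs_mul, abs_neg, habs s₁ e hs₁ he, one_mul]
      rw [h1]; exact hybound i
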